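/- For all integers d ≥ 1, k ≥ 2 and h ≥ 2, there exist a constant c > 0, a constant δ > 0 and an integer N such that for all n ≥ N, every subset A ⊆ [n]^d with |A| ≥ (1−δ)·n^d, and every point v ∈ A, one has f_A(v) ≥ c·n^{dk(h−1)}. -/

import Mathlib

open Finset

/-- The `d`-dimensional grid `[n]^d = {1,…,n}^d`, as a finset of functions `Fin d → ℕ`. -/
def grid (n d : ℕ) : Finset (Fin d → ℕ) :=
  Fintype.piFinset fun _ => Finset.Icc 1 n

/-- `X` is a `B_{k,h}`-solution set: `X` consists of `k*h` (pairwise distinct) points that can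
be partitioned into `k` groups of `h` points each, all groups having the same sum. -/
def IsBkhSol (d k h : ℕ) (X : Finset (Fin d → ℕ)) : Prop :=
  X.card = k * h ∧
  ∃ P : Fin k → Finset (Fin d → ℕ),
    (∀ ℓ, (P ℓ).card = h) ∧
    (∀ ℓ₁ ℓ₂, ℓ₁ ≠ ℓ₂ → Disjoint (P ℓ₁) (P ℓ₂)) ∧
    Finset.univ.biUnion P = X ∧
    (∀ ℓ₁ ℓ₂ : Fin k, (P ℓ₁).sum id = (P ℓ₂).sum id)

/-- The coloring `c` of `A` has a rainbow solution to the `B_{k,h}`-equation. -/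
def HasRainbow (d k h r : ℕ) (A : Finset (Fin d → ℕ)) (c : ↥A → Fin r) : Prop :=
  ∃ X : Finset ↥A, IsBkhSol d k h (X.image Subtype.val) ∧ Set.InjOn c ↑X

/-- `gr d k h r A` is the number of `r`-colorings of `A` without rainbow solutions to the
`B_{k,h}`-equation. -/
noncomputable def gr (d k h r : ℕ) (A : Finset (Fin d → ℕ)) : ℕ :=
  Nat.card {c : ↥A → Fin r // ¬ HasRainbow d k h r A c}

/-- `fdkh d k h A` is the number of `B_{k,h}`-solution sets contained in `A`. -/
noncomputable def fdkh (d k h : ℕ) (A : Finset (Fin d → ℕ)) : ℕ :=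
  Nat.card {X : Finset (Fin d → ℕ) // X ⊆ A ∧ IsBkhSol d k h X}

/-- `fAv d k h A v` is the number of distinct sets of `k*h - 1` pairwise distinct points of
`A \ {v}` which, with `v` playing the role of `x_{1,1}`, satisfy
`v + Σ_{i=2}^h x_{1,i} = Σ_{i=1}^h x_{2,i} = ⋯ = Σ_{i=1}^h x_{k,i}`. -/
noncomputable def fAv (d k h : ℕ) (A : Finset (Fin d → ℕ)) (v : Fin d → ℕ) : ℕ :=
  Nat.card {X : Finset (Fin d → ℕ) //
    ∃ x : Fin k → Fin h → (Fin d → ℕ),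
      Function.Injective (fun p : Fin k × Fin h => x p.1 p.2) ∧
      (∀ (ℓ : Fin k) (i : Fin h), (ℓ : ℕ) = 0 ∧ (i : ℕ) = 0 → x ℓ i = v) ∧
      (∀ (ℓ : Fin k) (i : Fin h), ¬((ℓ : ℕ) = 0 ∧ (i : ℕ) = 0) → x ℓ i ∈ A ∧ x ℓ i ≠ v) ∧
      (∀ ℓ₁ ℓ₂ : Fin k, ∑ i, x ℓ₁ i = ∑ i, x ℓ₂ i) ∧
      X = Finset.image (fun p : Fin k × Fin h => x p.1 p.2)
            (Finset.univ.filter fun p : Fin k × Fin h => ¬((p.1 : ℕ) = 0 ∧ (p.2 : ℕ) = 0))}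


namespace Stmt11Aux


variable {d κ μ : ℕ}

/-- shift for row-0 boxes -/
def sfun (n b M : ℕ) (v : Fin d → ℕ) (j : Fin d) : ℕ :=
  min ((n - v j) / M) (n - b)

def box0 (n b M : ℕ) (v : Fin d → ℕ) : Finset (Fin d → ℕ) :=
  Fintype.piFinset fun j => Finset.Icc (sfun n b M v j + 1) (sfun n b M v j + b)

def box1 (d b : ℕ) : Finset (Fin d → ℕ) :=
  Fintype.piFinset fun _ => Finset.Icc (b + 1) (2 * b)

def Bx (κ μ n b : ℕ) (v : Fin d → ℕ) : Fin (κ+2) × Fin (μ+1) → Finset (Fin d → ℕ) :=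
  fun p => if p.1 = 0 then box0 n b (μ+1) v else box1 d b

def Tset (κ μ n b : ℕ) (v : Fin d → ℕ) : Finset ((Fin (κ+2) × Fin (μ+1)) → (Fin d → ℕ)) :=
  Fintype.piFinset (Bx κ μ n b v)

def S0 (y : Fin (κ+2) × Fin (μ+1) → (Fin d → ℕ)) (j : Fin d) : ℕ :=
  ∑ i : Fin (μ+1), y (0, i) j

def Srow (ℓ : Fin (κ+2)) (y : Fin (κ+2) × Fin (μ+1) → (Fin d → ℕ)) (j : Fin d) : ℕ :=
  ∑ i : Fin (μ+1), y (ℓ, i) j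

def wpt (v : Fin d → ℕ) (y : Fin (κ+2) × Fin (μ+1) → (Fin d → ℕ)) (ℓ : Fin (κ+2)) :
    Fin d → ℕ :=
  fun j => v j + S0 y j - Srow ℓ y j

def xfn (v : Fin d → ℕ) (y : Fin (κ+2) × Fin (μ+1) → (Fin d → ℕ)) :
    Fin (κ+2) × Fin (μ+2) → (Fin d → ℕ) :=
  fun p => if p.1 = 0 then Fin.cases v (fun i' => y (0, i')) p.2
    else Fin.lastCases (wpt v y p.1) (fun i' => y (p.1, i')) p.2

@[simp] lemma xfn_zero (v : Fin d → ℕ) (y : Fin (κ+2) × Fin (μ+1) → (Fin d → ℕ)) :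
    xfn v y (0, 0) = v := by simp [xfn]

@[simp] lemma xfn_zsucc (v : Fin d → ℕ) (y : Fin (κ+2) × Fin (μ+1) → (Fin d → ℕ))
    (i : Fin (μ+1)) : xfn v y (0, i.succ) = y (0, i) := by simp [xfn]

lemma xfn_cast (v : Fin d → ℕ) (y : Fin (κ+2) × Fin (μ+1) → (Fin d → ℕ))
    {ℓ : Fin (κ+2)} (hℓ : ℓ ≠ 0) (i : Fin (μ+1)) :
    xfn v y (ℓ, i.castSucc) = y (ℓ, i) := by simp [xfn, hℓ]

lemma xfn_last (v : Fin d → ℕ) (y : Fin (κ+2) × Fin (μ+1) → (Fin d → ℕ))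
    {ℓ : Fin (κ+2)} (hℓ : ℓ ≠ 0) :
    xfn v y (ℓ, Fin.last (μ+1)) = wpt v y ℓ := by simp [xfn, hℓ]


section Bounds

variable {d κ μ n b : ℕ} {v : Fin d → ℕ} {y z : Fin (κ+2) × Fin (μ+1) → (Fin d → ℕ)}

lemma mem0 (hy : y ∈ Tset κ μ n b v) (i : Fin (μ+1)) (j : Fin d) :
    sfun n b (μ+1) v j + 1 ≤ y (0, i) j ∧ y (0, i) j ≤ sfun n b (μ+1) v j + b := by
  have h1 := Fintype.mem_piFinset.mp hy (0, i)
  rw [Bx, if_pos rfl] at h1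
  exact Finset.mem_Icc.mp (Fintype.mem_piFinset.mp h1 j)

lemma mem1 (hy : y ∈ Tset κ μ n b v) {ℓ : Fin (κ+2)} (hℓ : ℓ ≠ 0) (i : Fin (μ+1)) (j : Fin d) :
    b + 1 ≤ y (ℓ, i) j ∧ y (ℓ, i) j ≤ 2 * b := by
  have h1 := Fintype.mem_piFinset.mp hy (ℓ, i)
  rw [Bx, if_neg hℓ] at h1
  exact Finset.mem_Icc.mp (Fintype.mem_piFinset.mp h1 j)

lemma S0_le (hy : y ∈ Tset κ μ n b v) (j : Fin d) :
    S0 y j ≤ (μ+1) * (sfun n b (μ+1) v j + b) := by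
  calc S0 y j ≤ ∑ _i : Fin (μ+1), (sfun n b (μ+1) v j + b) :=
        Finset.sum_le_sum fun i _ => (mem0 hy i j).2
    _ = (μ+1) * (sfun n b (μ+1) v j + b) := by
        rw [Finset.sum_const, Finset.card_univ, Fintype.card_fin, smul_eq_mul]

lemma le_S0 (hy : y ∈ Tset κ μ n b v) (j : Fin d) :
    (μ+1) * (sfun n b (μ+1) v j + 1) ≤ S0 y j := by
  calc (μ+1) * (sfun n b (μ+1) v j + 1)
      = ∑ _i : Fin (μ+1), (sfun n b (μ+1) v j + 1) := by
        rw [Finset.sum_const, Finset.card_univ, Fintype.card_fin, smul_eq_mul]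
    _ ≤ S0 y j := Finset.sum_le_sum fun i _ => (mem0 hy i j).1

lemma Srow_le (hy : y ∈ Tset κ μ n b v) {ℓ : Fin (κ+2)} (hℓ : ℓ ≠ 0) (j : Fin d) :
    Srow ℓ y j ≤ (μ+1) * (2*b) := by
  calc Srow ℓ y j ≤ ∑ _i : Fin (μ+1), (2*b) :=
        Finset.sum_le_sum fun i _ => (mem1 hy hℓ i j).2
    _ = (μ+1) * (2*b) := by
        rw [Finset.sum_const, Finset.card_univ, Fintype.card_fin, smul_eq_mul]

lemma le_Srow (hy : y ∈ Tset κ μ n b v) {ℓ : Fin (κ+2)} (hℓ : ℓ ≠ 0) (j : Fin d) :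
    (μ+1) * (b+1) ≤ Srow ℓ y j := by
  calc (μ+1) * (b+1) = ∑ _i : Fin (μ+1), (b+1) := by
        rw [Finset.sum_const, Finset.card_univ, Fintype.card_fin, smul_eq_mul]
    _ ≤ Srow ℓ y j := Finset.sum_le_sum fun i _ => (mem1 hy hℓ i j).1

lemma key1 (hb : 1 ≤ b) (hn : 3 * ((μ+1) * b) ≤ n) (hv : ∀ j, 1 ≤ v j ∧ v j ≤ n) (j : Fin d) :
    2 * ((μ+1) * b) ≤ v j + (μ+1) * sfun n b (μ+1) v j := by
  rcases le_total ((n - v j) / (μ+1)) (n - b) with hc | hc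
  · rw [sfun, min_eq_left hc]
    have h1 := Nat.div_add_mod (n - v j) (μ+1)
    have h2 : (n - v j) % (μ+1) < (μ+1) := Nat.mod_lt _ (by omega)
    have h3 : v j ≤ n := (hv j).2
    have h4 : (μ+1) * 1 ≤ (μ+1) * b := Nat.mul_le_mul_left _ hb
    nlinarith [Nat.sub_add_cancel h3]
  · rw [sfun, min_eq_right hc]
    have hb3 : 1 * b ≤ (μ+1) * b := Nat.mul_le_mul_right _ (by omega)
    have h5 : 3 * b ≤ n := by linarith
    have h6 : (μ+1) * (2*b) ≤ (μ+1) * (n - b) := Nat.mul_le_mul_left _ (by omega)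
    have h7 := (hv j).1
    nlinarith

lemma key2 (hv : ∀ j, 1 ≤ v j ∧ v j ≤ n) (j : Fin d) :
    v j + (μ+1) * sfun n b (μ+1) v j ≤ n := by
  have h1 : (μ+1) * sfun n b (μ+1) v j ≤ (μ+1) * ((n - v j) / (μ+1)) :=
    Nat.mul_le_mul_left _ (min_le_left _ _)
  have h2 : (n - v j) / (μ+1) * (μ+1) ≤ n - v j := Nat.div_mul_le_self _ _
  have h3 : v j ≤ n := (hv j).2
  nlinarith [Nat.sub_add_cancel h3, mul_comm ((n - v j) / (μ+1)) (μ+1)]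

lemma safety (hb : 1 ≤ b) (hn : 3 * ((μ+1) * b) ≤ n) (hv : ∀ j, 1 ≤ v j ∧ v j ≤ n)
    (hy : y ∈ Tset κ μ n b v) {ℓ : Fin (κ+2)} (hℓ : ℓ ≠ 0) (j : Fin d) :
    Srow ℓ y j + (μ+1) ≤ v j + S0 y j := by
  have a1 := Srow_le hy hℓ j
  have a2 := le_S0 hy j
  have k1 := key1 hb hn hv j
  nlinarith

lemma w_eq (hb : 1 ≤ b) (hn : 3 * ((μ+1) * b) ≤ n) (hv : ∀ j, 1 ≤ v j ∧ v j ≤ n)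
    (hy : y ∈ Tset κ μ n b v) {ℓ : Fin (κ+2)} (hℓ : ℓ ≠ 0) (j : Fin d) :
    wpt v y ℓ j + Srow ℓ y j = v j + S0 y j := by
  have := safety hb hn hv hy hℓ j
  rw [wpt]; omega

lemma w_ge (hb : 1 ≤ b) (hn : 3 * ((μ+1) * b) ≤ n) (hv : ∀ j, 1 ≤ v j ∧ v j ≤ n)
    (hy : y ∈ Tset κ μ n b v) {ℓ : Fin (κ+2)} (hℓ : ℓ ≠ 0) (j : Fin d) :
    1 ≤ wpt v y ℓ j := by
  have h1 := safety hb hn hv hy hℓ j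
  have h2 := w_eq hb hn hv hy hℓ j
  omega

lemma w_le (hb : 1 ≤ b) (hn : 3 * ((μ+1) * b) ≤ n) (hv : ∀ j, 1 ≤ v j ∧ v j ≤ n)
    (hy : y ∈ Tset κ μ n b v) {ℓ : Fin (κ+2)} (hℓ : ℓ ≠ 0) (j : Fin d) :
    wpt v y ℓ j ≤ n := by
  have h1 := w_eq hb hn hv hy hℓ j
  have h2 := S0_le hy j
  have h3 := le_Srow hy hℓ j
  have h4 := key2 (μ := μ) (b := b) hv j
  nlinarith

lemma ble (hb : 1 ≤ b) (hn : 3 * ((μ+1) * b) ≤ n) : 3 * b ≤ n := by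
  have hb3 : 1 * b ≤ (μ+1) * b := Nat.mul_le_mul_right _ (by omega)
  linarith

lemma xfn_mem_grid (hb : 1 ≤ b) (hn : 3 * ((μ+1) * b) ≤ n) (hv : ∀ j, 1 ≤ v j ∧ v j ≤ n)
    (hy : y ∈ Tset κ μ n b v) (p : Fin (κ+2) × Fin (μ+2)) :
    xfn v y p ∈ grid n d := by
  have hbn : 3 * b ≤ n := ble hb hn
  rw [grid, Fintype.mem_piFinset]
  intro j
  rw [Finset.mem_Icc]
  obtain ⟨ℓ, i⟩ := p
  by_cases hℓ : ℓ = 0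
  · subst hℓ
    induction i using Fin.cases with
    | zero => rw [xfn_zero]; exact hv j
    | succ i' =>
      rw [xfn_zsucc]
      have h1 := mem0 hy i' j
      have h2 : sfun n b (μ+1) v j ≤ n - b := min_le_right _ _
      omega
  · induction i using Fin.lastCases with
    | last => rw [xfn_last v y hℓ]; exact ⟨w_ge hb hn hv hy hℓ j, w_le hb hn hv hy hℓ j⟩
    | cast i' =>
      rw [xfn_cast v y hℓ]
      have h1 := mem1 hy hℓ i' j
      omega

end Bounds

section Recover

variable {d κ μ n b : ℕ} {v : Fin d → ℕ} {y z : Fin (κ+2) × Fin (μ+1) → (Fin d → ℕ)}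

def slotOf (p : Fin (κ+2) × Fin (μ+1)) : Fin (κ+2) × Fin (μ+2) :=
  if p.1 = 0 then (0, p.2.succ) else (p.1, p.2.castSucc)

def pinOf (p : Fin (κ+2) × Fin (μ+2)) : Fin (κ+2) × Fin (μ+1) :=
  if p.1 = 0 then (0, Fin.cases 0 (fun i' => i') p.2)
  else (p.1, Fin.lastCases 0 (fun i' => i') p.2)

def rnk (p : Fin (κ+2) × Fin (μ+2)) : ℕ :=
  if p.1 = 0 then (if p.2 = 0 then 0 else 1)
  else (if p.2 = Fin.last (μ+1) then 2 else 1)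

lemma rnk_zero {p : Fin (κ+2) × Fin (μ+2)} (h : rnk p = 0) : p = (0, 0) := by
  obtain ⟨ℓ, i⟩ := p
  rw [rnk] at h
  by_cases hℓ : ℓ = 0
  · rw [if_pos hℓ] at h
    by_cases hi : i = 0
    · rw [hℓ, hi]
    · rw [if_neg hi] at h; omega
  · rw [if_neg hℓ] at h
    by_cases hi : i = Fin.last (μ+1) <;> simp [hi] at h

lemma rnk_zsucc (iq' : Fin (μ+1)) : rnk ((0 : Fin (κ+2)), iq'.succ) = 1 := by
  rw [rnk, if_pos rfl, if_neg (Fin.succ_ne_zero iq')]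

lemma rnk_cast {ℓ : Fin (κ+2)} (hℓ : ℓ ≠ 0) (i' : Fin (μ+1)) :
    rnk (ℓ, i'.castSucc) = 1 := by
  rw [rnk, if_neg hℓ, if_neg (Fin.ne_of_lt (Fin.castSucc_lt_last i'))]

lemma rnk_D {ℓ : Fin (κ+2)} (hℓ : ℓ ≠ 0) : rnk (ℓ, Fin.last (μ+1)) = 2 := by
  rw [rnk, if_neg hℓ, if_pos rfl]

lemma not_D_of_rnk {p : Fin (κ+2) × Fin (μ+2)} (h : rnk p ≤ 1) (hp : p.1 ≠ 0) :
    p.2 ≠ Fin.last (μ+1) := by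
  intro hc
  rw [rnk, if_neg hp, if_pos hc] at h; omega

lemma S0_congr {ℓ₀ : Fin (κ+2)} {i₀ : Fin (μ+1)}
    (hag : ∀ r, r ≠ (ℓ₀, i₀) → y r = z r) (hℓ₀ : ℓ₀ ≠ 0) (j : Fin d) :
    S0 y j = S0 z j :=
  Finset.sum_congr rfl fun i _ => by
    rw [hag (0, i) (fun hq => hℓ₀ ((Prod.ext_iff.mp hq).1).symm)]

lemma Srow_congr {ℓ₀ ℓ : Fin (κ+2)} {i₀ : Fin (μ+1)}
    (hag : ∀ r, r ≠ (ℓ₀, i₀) → y r = z r) (hne : ℓ ≠ ℓ₀) (j : Fin d) :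
    Srow ℓ y j = Srow ℓ z j :=
  Finset.sum_congr rfl fun i _ => by
    rw [hag (ℓ, i) (fun hq => hne ((Prod.ext_iff.mp hq).1))]

lemma Srow_split (ℓ : Fin (κ+2)) (y : Fin (κ+2) × Fin (μ+1) → (Fin d → ℕ)) (j : Fin d) :
    Srow ℓ y j = y (ℓ, 0) j + ∑ i ∈ Finset.univ.erase 0, y (ℓ, i) j := by
  rw [Srow, ← Finset.add_sum_erase Finset.univ _ (Finset.mem_univ 0)]

lemma rest_congr {ℓ₀ : Fin (κ+2)}
    (hag : ∀ r, r ≠ (ℓ₀, (0 : Fin (μ+1))) → y r = z r) (j : Fin d) :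
    ∑ i ∈ Finset.univ.erase 0, y (ℓ₀, i) j = ∑ i ∈ Finset.univ.erase 0, z (ℓ₀, i) j :=
  Finset.sum_congr rfl fun i hi => by
    rw [hag (ℓ₀, i) (fun hq => (Finset.mem_erase.mp hi).1 ((Prod.ext_iff.mp hq).2))]

/-- If `y` and `z` agree off the pin slot `(ℓ₀, i₀)`, then `xfn` agrees at any slot `p` not
directly equal to the slot of the pin, and, if `p` is a determined slot, not in row `ℓ₀`
(with the pin not in row 0). -/
lemma F_inv (hb : 1 ≤ b) (hn : 3 * ((μ+1) * b) ≤ n) (hv : ∀ j, 1 ≤ v j ∧ v j ≤ n)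
    (hy : y ∈ Tset κ μ n b v) (hz : z ∈ Tset κ μ n b v)
    {ℓ₀ : Fin (κ+2)} {i₀ : Fin (μ+1)}
    (hag : ∀ r, r ≠ (ℓ₀, i₀) → y r = z r)
    {p : Fin (κ+2) × Fin (μ+2)} (hp1 : p ≠ slotOf (ℓ₀, i₀))
    (hp2 : p.1 ≠ 0 → p.2 = Fin.last (μ+1) → (ℓ₀ ≠ 0 ∧ p.1 ≠ ℓ₀)) :
    xfn v y p = xfn v z p := by
  obtain ⟨ℓ, i⟩ := p
  by_cases hℓ : ℓ = 0
  · subst hℓ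
    induction i using Fin.cases with
    | zero => rw [xfn_zero, xfn_zero]
    | succ i' =>
      rw [xfn_zsucc, xfn_zsucc]
      refine hag (0, i') fun hq => hp1 ?_
      rw [← hq, slotOf, if_pos rfl]
  · induction i using Fin.lastCases with
    | last =>
      obtain ⟨hℓ₀, hneq⟩ := hp2 hℓ rfl
      have hneq' : ℓ ≠ ℓ₀ := hneq
      rw [xfn_last v y hℓ, xfn_last v z hℓ]
      funext j
      have ey := w_eq hb hn hv hy hℓ j
      have ez := w_eq hb hn hv hz hℓ j
      have hS0 : S0 y j = S0 z j := S0_congr hag hℓ₀ j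
      have hSr : Srow ℓ y j = Srow ℓ z j := Srow_congr hag hneq' j
      omega
    | cast i' =>
      rw [xfn_cast v y hℓ, xfn_cast v z hℓ]
      refine hag (ℓ, i') fun hq => hp1 ?_
      rw [← hq, slotOf, if_neg hℓ]

lemma pinOf_zsucc (i' : Fin (μ+1)) :
    pinOf ((0 : Fin (κ+2)), i'.succ) = (0, i') := by
  rw [pinOf, if_pos rfl]; simp

lemma pinOf_cast {ℓ : Fin (κ+2)} (hℓ : ℓ ≠ 0) (i' : Fin (μ+1)) :
    pinOf (ℓ, i'.castSucc) = (ℓ, i') := by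
  rw [pinOf, if_neg hℓ]; simp

lemma pinOf_last {ℓ : Fin (κ+2)} (hℓ : ℓ ≠ 0) :
    pinOf (ℓ, Fin.last (μ+1)) = (ℓ, 0) := by
  rw [pinOf, if_neg hℓ]; simp

/-- Recovery for the "point not in A" bad sets. -/
lemma recover_inl (hb : 1 ≤ b) (hn : 3 * ((μ+1) * b) ≤ n) (hv : ∀ j, 1 ≤ v j ∧ v j ≤ n)
    (hy : y ∈ Tset κ μ n b v) (hz : z ∈ Tset κ μ n b v)
    {p : Fin (κ+2) × Fin (μ+2)} (hp : p ≠ (0, 0))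
    (heq : xfn v y p = xfn v z p)
    (hag : ∀ r, r ≠ pinOf p → y r = z r) : y = z := by
  funext r
  by_cases hr : r = pinOf p
  · subst hr
    obtain ⟨ℓ, i⟩ := p
    by_cases hℓ : ℓ = 0
    · subst hℓ
      induction i using Fin.cases with
      | zero => exact absurd rfl hp
      | succ i' =>
        rw [pinOf_zsucc]
        rw [xfn_zsucc, xfn_zsucc] at heq
        exact heq
    · induction i using Fin.lastCases with
      | cast i' =>
        rw [pinOf_cast hℓ]
        rw [xfn_cast v y hℓ, xfn_cast v z hℓ] at heq
        exact heq
      | last =>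
        rw [pinOf_last hℓ] at hag ⊢
        rw [xfn_last v y hℓ, xfn_last v z hℓ] at heq
        funext j
        have ey := w_eq hb hn hv hy hℓ j
        have ez := w_eq hb hn hv hz hℓ j
        have hS0 := S0_congr hag hℓ j
        have hsy := Srow_split ℓ y j
        have hsz := Srow_split ℓ z j
        have hrest := rest_congr hag j
        have heqj : wpt v y ℓ j = wpt v z ℓ j := congrFun heq j
        omega
  · exact hag r hr

/-- Recovery for the collision bad sets. -/
lemma recover_inr (hb : 1 ≤ b) (hn : 3 * ((μ+1) * b) ≤ n) (hv : ∀ j, 1 ≤ v j ∧ v j ≤ n)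
    (hy : y ∈ Tset κ μ n b v) (hz : z ∈ Tset κ μ n b v)
    {p q : Fin (κ+2) × Fin (μ+2)} (hpq : p ≠ q) (hrank : rnk p ≤ rnk q)
    (h1 : xfn v y p = xfn v y q) (h2 : xfn v z p = xfn v z q)
    (hag : ∀ r, r ≠ pinOf q → y r = z r) : y = z := by
  funext r
  by_cases hr : r = pinOf q
  · subst hr
    obtain ⟨ℓq, iq⟩ := q
    by_cases hℓq : ℓq = 0
    · subst hℓq
      induction iq using Fin.cases with
      | zero =>
        exfalso
        have h0 : rnk ((0 : Fin (κ+2)), (0 : Fin (μ+2))) = 0 := by rw [rnk]; simp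
        rw [h0, Nat.le_zero] at hrank
        exact hpq (rnk_zero hrank)
      | succ iq' =>
        rw [pinOf_zsucc] at hag ⊢
        rw [xfn_zsucc] at h1
        rw [xfn_zsucc] at h2
        have hrk : rnk p ≤ 1 := by rw [rnk_zsucc] at hrank; exact hrank
        have hFp : xfn v y p = xfn v z p := by
          refine F_inv hb hn hv hy hz hag ?_ ?_
          · rw [slotOf, if_pos rfl]; exact hpq
          · intro ha hb'; exact absurd hb' (not_D_of_rnk hrk ha)
        rw [← h1, ← h2, hFp]
    · induction iq using Fin.lastCases with
      | cast iq' =>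
        rw [pinOf_cast hℓq] at hag ⊢
        rw [xfn_cast v y hℓq] at h1
        rw [xfn_cast v z hℓq] at h2
        have hrk : rnk p ≤ 1 := by rw [rnk_cast hℓq] at hrank; exact hrank
        have hFp : xfn v y p = xfn v z p := by
          refine F_inv hb hn hv hy hz hag ?_ ?_
          · rw [slotOf, if_neg hℓq]; exact hpq
          · intro ha hb'; exact absurd hb' (not_D_of_rnk hrk ha)
        rw [← h1, ← h2, hFp]
      | last =>
        rw [pinOf_last hℓq] at hag ⊢
        rw [xfn_last v y hℓq] at h1
        rw [xfn_last v z hℓq] at h2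
        funext j
        have ey := w_eq hb hn hv hy hℓq j
        have ez := w_eq hb hn hv hz hℓq j
        have hS0 := S0_congr hag hℓq j
        have hsy := Srow_split ℓq y j
        have hsz := Srow_split ℓq z j
        have hrest := rest_congr hag j
        have h1j : xfn v y p j = wpt v y ℓq j := congrFun h1 j
        have h2j : xfn v z p j = wpt v z ℓq j := congrFun h2 j
        by_cases hp : p = (ℓq, Fin.castSucc 0)
        · subst hp
          rw [xfn_cast v y hℓq] at h1j
          rw [xfn_cast v z hℓq] at h2j
          omega
        · have hFp : xfn v y p = xfn v z p := by
            refine F_inv hb hn hv hy hz hag ?_ ?_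
            · rw [slotOf, if_neg hℓq]; exact hp
            · intro ha hb'
              refine ⟨hℓq, fun hc => hpq ?_⟩
              rw [Prod.ext_iff]; exact ⟨hc, hb'⟩
          have hFpj : xfn v y p j = xfn v z p j := congrFun hFp j
          omega
  · exact hag r hr

end Recover

section Counting

lemma pin_card {ι α β : Type*} [Fintype ι] [DecidableEq ι] [DecidableEq α] [DecidableEq β]
    (B : ι → Finset α) (S : Finset (ι → α)) (hS : S ⊆ Fintype.piFinset B)
    (p₀ : ι) (a : α) (g : (ι → α) → β) (Gb : Finset β)
    (hg : ∀ y ∈ S, g y ∈ Gb)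
    (hinj : ∀ y ∈ S, ∀ z ∈ S, g y = g z → (∀ q, q ≠ p₀ → y q = z q) → y = z) :
    S.card ≤ Gb.card * ∏ q ∈ Finset.univ.erase p₀, (B q).card := by
  have hcard : S.card ≤ (Gb ×ˢ Fintype.piFinset (Function.update B p₀ {a})).card := by
    apply Finset.card_le_card_of_injOn (fun y => (g y, Function.update y p₀ a))
    · intro y hyS
      rw [Finset.mem_coe, Finset.mem_product]
      refine ⟨hg y hyS, ?_⟩
      rw [Fintype.mem_piFinset]
      show ∀ q, Function.update y p₀ a q ∈ Function.update B p₀ ({a} : Finset α) q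
      intro q
      by_cases hq : q = p₀
      · subst hq
        rw [Function.update_self, Function.update_self]
        exact Finset.mem_singleton_self a
      · rw [Function.update_of_ne hq, Function.update_of_ne hq]
        exact Fintype.mem_piFinset.mp (hS hyS) q
    · intro y hyS z hzS hyz
      rw [Prod.mk.injEq] at hyz
      refine hinj y hyS z hzS hyz.1 fun q hq => ?_
      have h := congrFun hyz.2 q
      rwa [Function.update_of_ne hq, Function.update_of_ne hq] at h
  rw [Finset.card_product, Fintype.card_piFinset] at hcard
  calc S.card ≤ Gb.card * ∏ q, ((Function.update B p₀ ({a} : Finset α)) q).card := hcard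
    _ = Gb.card * ∏ q ∈ Finset.univ.erase p₀, (B q).card := by
        congr 1
        have e1 : ∀ q, ((Function.update B p₀ ({a} : Finset α)) q).card
            = Function.update (fun r => (B r).card) p₀ (({a} : Finset α).card) q :=
          fun q => Function.apply_update (fun _ s => s.card) B p₀ {a} q
        rw [Finset.prod_congr rfl fun q _ => e1 q,
          Finset.prod_update_of_mem (Finset.mem_univ p₀),
          Finset.card_singleton, one_mul, ← Finset.erase_eq]

variable {d κ μ n b : ℕ} {v : Fin d → ℕ}

lemma card_Bx (p : Fin (κ+2) × Fin (μ+1)) : (Bx κ μ n b v p).card = b ^ d := by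
  rw [Bx]
  split
  · rw [box0, Fintype.card_piFinset]
    have h : ∀ j : Fin d,
        (Finset.Icc (sfun n b (μ+1) v j + 1) (sfun n b (μ+1) v j + b)).card = b := by
      intro j; rw [Nat.card_Icc]; omega
    rw [Finset.prod_congr rfl fun j _ => h j, Finset.prod_const, Finset.card_univ,
      Fintype.card_fin]
  · rw [box1, Fintype.card_piFinset]
    have h : ∀ _j : Fin d, (Finset.Icc (b + 1) (2 * b)).card = b := by
      intro j; rw [Nat.card_Icc]; omega
    rw [Finset.prod_congr rfl fun j _ => h j, Finset.prod_const, Finset.card_univ,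
      Fintype.card_fin]

lemma card_Tset : (Tset κ μ n b v).card = (b ^ d) ^ ((κ+2) * (μ+1)) := by
  rw [Tset, Fintype.card_piFinset, Finset.prod_congr rfl fun p _ => card_Bx p,
    Finset.prod_const, Finset.card_univ, Fintype.card_prod, Fintype.card_fin, Fintype.card_fin]

lemma prod_erase_Bx (p₀ : Fin (κ+2) × Fin (μ+1)) :
    ∏ q ∈ Finset.univ.erase p₀, (Bx κ μ n b v q).card = (b ^ d) ^ ((κ+2) * (μ+1) - 1) := by
  rw [Finset.prod_congr rfl fun q _ => card_Bx q, Finset.prod_const,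
    Finset.card_erase_of_mem (Finset.mem_univ p₀), Finset.card_univ, Fintype.card_prod,
    Fintype.card_fin, Fintype.card_fin]

lemma bad_inl_card (hb : 1 ≤ b) (hn : 3 * ((μ+1) * b) ≤ n) (hv : ∀ j, 1 ≤ v j ∧ v j ≤ n)
    (A : Finset (Fin d → ℕ)) {p : Fin (κ+2) × Fin (μ+2)} (hp : p ≠ (0, 0)) :
    ((Tset κ μ n b v).filter (fun y => xfn v y p ∉ A)).card
      ≤ (grid n d \ A).card * (b ^ d) ^ ((κ+2) * (μ+1) - 1) := by
  have h := pin_card (Bx κ μ n b v)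
    ((Tset κ μ n b v).filter (fun y => xfn v y p ∉ A))
    (Finset.filter_subset _ _) (pinOf p)
    (fun _ => 0) (fun y => xfn v y p) (grid n d \ A)
    (fun y hy => by
      obtain ⟨hyT, hyA⟩ := Finset.mem_filter.mp hy
      exact Finset.mem_sdiff.mpr ⟨xfn_mem_grid hb hn hv hyT p, hyA⟩)
    (fun y hy z hz hg hag =>
      recover_inl hb hn hv (Finset.mem_filter.mp hy).1 (Finset.mem_filter.mp hz).1 hp hg hag)
  rwa [prod_erase_Bx] at h

lemma bad_inr_card (hb : 1 ≤ b) (hn : 3 * ((μ+1) * b) ≤ n) (hv : ∀ j, 1 ≤ v j ∧ v j ≤ n)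
    {p q : Fin (κ+2) × Fin (μ+2)} (hpq : p ≠ q) (hrank : rnk p ≤ rnk q) :
    ((Tset κ μ n b v).filter (fun y => xfn v y p = xfn v y q)).card
      ≤ (b ^ d) ^ ((κ+2) * (μ+1) - 1) := by
  have h := pin_card (Bx κ μ n b v)
    ((Tset κ μ n b v).filter (fun y => xfn v y p = xfn v y q))
    (Finset.filter_subset _ _) (pinOf q)
    (fun _ => 0) (fun _ => ()) ({()} : Finset Unit)
    (fun y _ => Finset.mem_singleton_self _)
    (fun y hy z hz _ hag =>
      recover_inr hb hn hv (Finset.mem_filter.mp hy).1 (Finset.mem_filter.mp hz).1 hpq hrank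
        (Finset.mem_filter.mp hy).2 (Finset.mem_filter.mp hz).2 hag)
  rwa [prod_erase_Bx, Finset.card_singleton, one_mul] at h

variable {y : Fin (κ+2) × Fin (μ+1) → (Fin d → ℕ)}

lemma sum_row0 (y : Fin (κ+2) × Fin (μ+1) → (Fin d → ℕ)) :
    ∑ i : Fin (μ+2), xfn v y ((0 : Fin (κ+2)), i) = fun j => v j + S0 y j := by
  rw [Fin.sum_univ_succ]
  funext j
  rw [Pi.add_apply, Finset.sum_apply]
  have h0 : xfn v y ((0 : Fin (κ+2)), (0 : Fin (μ+2))) = v := xfn_zero v y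
  have hs : ∀ i : Fin (μ+1), xfn v y ((0 : Fin (κ+2)), i.succ) = y (0, i) := xfn_zsucc v y
  rw [h0]
  congr 1

lemma sum_rowl (hb : 1 ≤ b) (hn : 3 * ((μ+1) * b) ≤ n) (hv : ∀ j, 1 ≤ v j ∧ v j ≤ n)
    (hy : y ∈ Tset κ μ n b v) {ℓ : Fin (κ+2)} (hℓ : ℓ ≠ 0) :
    ∑ i : Fin (μ+2), xfn v y (ℓ, i) = fun j => v j + S0 y j := by
  rw [Fin.sum_univ_castSucc]
  funext j
  rw [Pi.add_apply, Finset.sum_apply]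
  have hc : ∀ i : Fin (μ+1), xfn v y (ℓ, i.castSucc) = y (ℓ, i) := fun i => xfn_cast v y hℓ i
  have hl : xfn v y (ℓ, Fin.last (μ+1)) = wpt v y ℓ := xfn_last v y hℓ
  rw [Finset.sum_congr rfl fun i _ => congrFun (hc i) j, congrFun hl j]
  have hw := w_eq hb hn hv hy hℓ j
  have hsum : ∑ i : Fin (μ+1), y (ℓ, i) j = Srow ℓ y j := rfl
  omega

end Counting

lemma xfn_slotOf {d κ μ : ℕ} (v : Fin d → ℕ) (y : Fin (κ+2) × Fin (μ+1) → (Fin d → ℕ))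
    (p : Fin (κ+2) × Fin (μ+1)) : xfn v y (slotOf p) = y p := by
  obtain ⟨ℓ, i⟩ := p
  by_cases hℓ : ℓ = 0
  · subst hℓ
    rw [slotOf, if_pos rfl]
    exact xfn_zsucc v y i
  · rw [slotOf, if_neg hℓ]
    exact xfn_cast v y hℓ i


end Stmt11Aux


set_option maxHeartbeats 1000000 in
open Stmt11Aux in
/-- lower bound on `f_A(v)` for dense subsets `A` of the grid. -/
theorem stmt11 (d k h : ℕ) (hd : 1 ≤ d) (hk : 2 ≤ k) (hh : 2 ≤ h) :
    ∃ c : ℝ, 0 < c ∧ ∃ δ : ℝ, 0 < δ ∧ ∃ N : ℕ, ∀ n : ℕ, N ≤ n →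
      ∀ A : Finset (Fin d → ℕ), A ⊆ grid n d →
      (1 - δ) * (n : ℝ) ^ d ≤ (A.card : ℝ) →
      ∀ v ∈ A, c * (n : ℝ) ^ (d * k * (h - 1)) ≤ (fAv d k h A v : ℝ) := by
  classical
  obtain ⟨κ, rfl⟩ : ∃ κ, k = κ + 2 := ⟨k - 2, by omega⟩
  obtain ⟨μ, rfl⟩ : ∃ μ, h = μ + 2 := ⟨h - 2, by omega⟩
  set KM : ℕ := (κ+2) * (μ+1) with hKM
  set C : ℕ := ((κ+2)*(μ+2)) ^ KM with hC
  have hCpos : 0 < C := by positivity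
  refine ⟨(((6*(μ+2)) ^ (d * KM) * (2*C) : ℕ) : ℝ)⁻¹, by positivity,
    (((4*(κ+2)*(μ+2)*(6*(μ+2))^d : ℕ)) : ℝ)⁻¹, by positivity,
    12*(κ+2)^2*(μ+2)^3 + 6*(μ+2), ?_⟩
  intro n hNn A hA hAcard v hvA
  -- basic setup
  set b : ℕ := n / (3*(μ+2)) with hbdef
  have hmupos : 0 < 3*(μ+2) := by positivity
  have hb : 1 ≤ b := by
    rw [hbdef, Nat.le_div_iff_mul_le hmupos]
    omega
  have hmod : n % (3*(μ+2)) < 3*(μ+2) := Nat.mod_lt _ hmupos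
  have hdm : 3*(μ+2)*b + n % (3*(μ+2)) = n := by
    rw [hbdef]; exact Nat.div_add_mod n (3*(μ+2))
  have hbmul : 3*(μ+2)*b ≤ n := by omega
  have hn3 : 3 * ((μ+1) * b) ≤ n := by nlinarith
  have hmb : 3*(μ+2)*1 ≤ 3*(μ+2)*b := Nat.mul_le_mul_left _ hb
  have hn6 : n ≤ 6*(μ+2)*b := by nlinarith
  have hb4 : 4*((κ+2)*(μ+2))^2 ≤ b := by
    rw [hbdef, Nat.le_div_iff_mul_le hmupos]
    nlinarith
  have hv : ∀ j, 1 ≤ v j ∧ v j ≤ n := by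
    intro j
    exact Finset.mem_Icc.mp (Fintype.mem_piFinset.mp (hA hvA) j)
  -- the parameter space and the good set
  set T : Finset ((Fin (κ+2) × Fin (μ+1)) → (Fin d → ℕ)) := Tset κ μ n b v with hT
  set Q : ((Fin (κ+2) × Fin (μ+1)) → (Fin d → ℕ)) → Prop :=
    fun y => (∀ p : Fin (κ+2) × Fin (μ+2), p ≠ (0, 0) → xfn v y p ∈ A) ∧
      (∀ p q : Fin (κ+2) × Fin (μ+2), p ≠ q → xfn v y p ≠ xfn v y q) with hQ
  set Good : Finset ((Fin (κ+2) × Fin (μ+1)) → (Fin d → ℕ)) := T.filter Q with hGood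
  set φv : ((Fin (κ+2) × Fin (μ+1)) → (Fin d → ℕ)) → Finset (Fin d → ℕ) :=
    fun y => Finset.image (xfn v y)
      (Finset.univ.filter fun p : Fin (κ+2) × Fin (μ+2) =>
        ¬((p.1 : ℕ) = 0 ∧ (p.2 : ℕ) = 0)) with hφv
  set G : ℕ := (grid n d \ A).card with hG
  set B : ℕ := b ^ d with hB
  set R : ℕ := B ^ (KM - 1) with hR
  have hKMpos : 1 ≤ KM := by
    have h0 : 0 < KM := by rw [hKM]; positivity
    exact h0
  have hpow : (b^d)^KM = (b^d) * (b^d)^(KM-1) := by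
    conv_lhs => rw [show KM = (KM-1)+1 by omega]
    rw [pow_succ']
  have hTB : T.card = B * R := by
    rw [hT, card_Tset, ← hKM, hpow, ← hB, ← hR]
  -- covering the complement of Good by bad sets
  set bad : ((Fin (κ+2) × Fin (μ+2)) ⊕ ((Fin (κ+2) × Fin (μ+2)) × (Fin (κ+2) × Fin (μ+2))))
      → Finset ((Fin (κ+2) × Fin (μ+1)) → (Fin d → ℕ)) :=
    Sum.elim
      (fun p => if p = (0,0) then ∅ else T.filter (fun y => xfn v y p ∉ A))
      (fun pq => if pq.1 ≠ pq.2 ∧ rnk pq.1 ≤ rnk pq.2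
        then T.filter (fun y => xfn v y pq.1 = xfn v y pq.2) else ∅) with hbad
  have hcover : T.filter (fun y => ¬ Q y) ⊆ Finset.univ.biUnion bad := by
    intro y hy
    obtain ⟨hyT, hnQ⟩ := Finset.mem_filter.mp hy
    simp only [hQ, not_and_or] at hnQ
    rcases hnQ with hnQ | hnQ
    · push_neg at hnQ
      obtain ⟨p, hp, hpA⟩ := hnQ
      refine Finset.mem_biUnion.mpr ⟨Sum.inl p, Finset.mem_univ _, ?_⟩
      simp only [hbad, Sum.elim_inl]
      rw [if_neg hp]
      exact Finset.mem_filter.mpr ⟨hyT, hpA⟩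
    · push_neg at hnQ
      obtain ⟨p, q, hpq, heq⟩ := hnQ
      rcases le_total (rnk p) (rnk q) with hle | hle
      · refine Finset.mem_biUnion.mpr ⟨Sum.inr (p, q), Finset.mem_univ _, ?_⟩
        simp only [hbad, Sum.elim_inr]
        rw [if_pos ⟨hpq, hle⟩]
        exact Finset.mem_filter.mpr ⟨hyT, heq⟩
      · refine Finset.mem_biUnion.mpr ⟨Sum.inr (q, p), Finset.mem_univ _, ?_⟩
        simp only [hbad, Sum.elim_inr]
        rw [if_pos ⟨Ne.symm hpq, hle⟩]
        exact Finset.mem_filter.mpr ⟨hyT, heq.symm⟩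
  have hsplit : Good.card + (T.filter (fun y => ¬ Q y)).card = T.card :=
    Finset.card_filter_add_card_filter_not Q
  have hbadsum : (T.filter (fun y => ¬ Q y)).card
      ≤ (κ+2)*(μ+2) * (G*R) + ((κ+2)*(μ+2))^2 * R := by
    have hc1 : Fintype.card (Fin (κ+2) × Fin (μ+2)) = (κ+2)*(μ+2) := by
      simp [Fintype.card_prod, Fintype.card_fin]
    calc (T.filter (fun y => ¬ Q y)).card ≤ (Finset.univ.biUnion bad).card :=
          Finset.card_le_card hcover
      _ ≤ ∑ j, (bad j).card := Finset.card_biUnion_le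
      _ = (∑ p : Fin (κ+2) × Fin (μ+2), (bad (Sum.inl p)).card)
          + ∑ pq : (Fin (κ+2) × Fin (μ+2)) × (Fin (κ+2) × Fin (μ+2)),
              (bad (Sum.inr pq)).card := Fintype.sum_sum_type _
      _ ≤ (∑ _p : Fin (κ+2) × Fin (μ+2), G * R)
          + ∑ _pq : (Fin (κ+2) × Fin (μ+2)) × (Fin (κ+2) × Fin (μ+2)), R := by
          apply Nat.add_le_add
          · apply Finset.sum_le_sum
            intro p _
            simp only [hbad, Sum.elim_inl]
            by_cases hp : p = (0,0)
            · rw [if_pos hp, Finset.card_empty]; exact Nat.zero_le _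
            · rw [if_neg hp]
              exact bad_inl_card hb hn3 hv A hp
          · apply Finset.sum_le_sum
            intro pq _
            simp only [hbad, Sum.elim_inr]
            by_cases hpq : pq.1 ≠ pq.2 ∧ rnk pq.1 ≤ rnk pq.2
            · rw [if_pos hpq]
              exact bad_inr_card hb hn3 hv hpq.1 hpq.2
            · rw [if_neg hpq, Finset.card_empty]; exact Nat.zero_le _
      _ = (κ+2)*(μ+2) * (G*R) + ((κ+2)*(μ+2))^2 * R := by
          rw [Finset.sum_const, Finset.sum_const, Finset.card_univ, Finset.card_univ,
            smul_eq_mul, smul_eq_mul, hc1, Fintype.card_prod, hc1]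
          ring
  -- density: G is small
  have hgridcard : (grid n d).card = n ^ d := by
    rw [grid, Fintype.card_piFinset]
    have h9 : ∀ _j : Fin d, (Finset.Icc 1 n).card = n := fun j => by rw [Nat.card_Icc]; omega
    rw [Finset.prod_congr rfl fun j _ => h9 j, Finset.prod_const, Finset.card_univ,
      Fintype.card_fin]
  have hAle : A.card ≤ n ^ d := hgridcard ▸ Finset.card_le_card hA
  have hGval : G = n ^ d - A.card := by rw [hG, Finset.card_sdiff_of_subset hA, hgridcard]
  have hGreal : (4*(κ+2)*(μ+2)*(6*(μ+2))^d) * G ≤ n ^ d := by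
    have hδpos : (0:ℝ) < ((4*(κ+2)*(μ+2)*(6*(μ+2))^d : ℕ) : ℝ) := by positivity
    have h1 : (G : ℝ) ≤ (((4*(κ+2)*(μ+2)*(6*(μ+2))^d : ℕ)) : ℝ)⁻¹ * (n:ℝ)^d := by
      rw [hGval]
      have hAcard' := hAcard
      push_cast [Nat.cast_sub hAle] at hAcard' ⊢
      linarith [hAcard']
    have h2 : (((4*(κ+2)*(μ+2)*(6*(μ+2))^d : ℕ)) : ℝ) * (G:ℝ) ≤ (n:ℝ)^d := by
      rw [mul_comm]
      calc (G:ℝ) * (((4*(κ+2)*(μ+2)*(6*(μ+2))^d : ℕ)) : ℝ)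
          ≤ ((((4*(κ+2)*(μ+2)*(6*(μ+2))^d : ℕ)) : ℝ)⁻¹ * (n:ℝ)^d) *
            (((4*(κ+2)*(μ+2)*(6*(μ+2))^d : ℕ)) : ℝ) :=
            mul_le_mul_of_nonneg_right h1 (le_of_lt hδpos)
        _ = (n:ℝ)^d := by field_simp
    exact_mod_cast h2
  have hnB : n ^ d ≤ (6*(μ+2))^d * B := by
    rw [hB, ← mul_pow]
    exact Nat.pow_le_pow_left hn6 d
  have hGB : 4*((κ+2)*(μ+2)) * G ≤ B := by
    have h1 : (6*(μ+2))^d * (4*((κ+2)*(μ+2)) * G) ≤ (6*(μ+2))^d * B := by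
      calc (6*(μ+2))^d * (4*((κ+2)*(μ+2)) * G) = (4*(κ+2)*(μ+2)*(6*(μ+2))^d) * G := by ring
        _ ≤ n ^ d := hGreal
        _ ≤ (6*(μ+2))^d * B := hnB
    exact Nat.le_of_mul_le_mul_left h1 (by positivity)
  have hB2 : 4*((κ+2)*(μ+2))^2 ≤ B := by
    calc 4*((κ+2)*(μ+2))^2 ≤ b := hb4
      _ ≤ b ^ d := Nat.le_self_pow (by omega) b
  -- Good is at least half of T
  have hGoodhalf : B * R ≤ 2 * Good.card := by
    have hkey : 2 * ((κ+2)*(μ+2) * (G*R) + ((κ+2)*(μ+2))^2 * R) ≤ B * R := by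
      have e1 : (4*((κ+2)*(μ+2)) * G) * R ≤ B * R := Nat.mul_le_mul_right _ hGB
      have e2 : (4*((κ+2)*(μ+2))^2) * R ≤ B * R := Nat.mul_le_mul_right _ hB2
      nlinarith
    have h6 : B * R ≤ Good.card + ((κ+2)*(μ+2) * (G*R) + ((κ+2)*(μ+2))^2 * R) := by
      rw [← hTB, ← hsplit]
      exact Nat.add_le_add_left hbadsum _
    linarith
  -- fiber bound: each image set has at most C preimages
  have hfiber : Good.card ≤ C * (Good.image φv).card := by
    apply Finset.card_le_mul_card_image
    intro X hX
    have hXcard : X.card ≤ (κ+2)*(μ+2) := by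
      obtain ⟨y, _, rfl⟩ := Finset.mem_image.mp hX
      calc (φv y).card ≤ (Finset.univ.filter fun p : Fin (κ+2) × Fin (μ+2) =>
            ¬((p.1 : ℕ) = 0 ∧ (p.2 : ℕ) = 0)).card := Finset.card_image_le
        _ ≤ (Finset.univ : Finset (Fin (κ+2) × Fin (μ+2))).card := Finset.card_filter_le _ _
        _ = (κ+2)*(μ+2) := by simp [Fintype.card_prod, Fintype.card_fin]
    have hsub : Good.filter (fun y => φv y = X)
        ⊆ Fintype.piFinset (fun _ : Fin (κ+2) × Fin (μ+1) => X) := by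
      intro y hy
      obtain ⟨hyG, hyX⟩ := Finset.mem_filter.mp hy
      rw [Fintype.mem_piFinset]
      intro p
      have h1 : xfn v y (slotOf p) = y p := xfn_slotOf v y p
      have h2 : slotOf p ∈ Finset.univ.filter fun r : Fin (κ+2) × Fin (μ+2) =>
          ¬((r.1 : ℕ) = 0 ∧ (r.2 : ℕ) = 0) := by
        rw [Finset.mem_filter]
        refine ⟨Finset.mem_univ _, ?_⟩
        rw [slotOf]
        by_cases hp : p.1 = 0
        · rw [if_pos hp]
          intro hc
          exact absurd hc.2 (by simp [Fin.val_succ])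
        · rw [if_neg hp]
          intro hc
          exact hp (Fin.ext hc.1)
      have h3 : xfn v y (slotOf p) ∈ φv y := Finset.mem_image_of_mem _ h2
      rw [h1, hyX] at h3
      exact h3
    calc (Good.filter (fun y => φv y = X)).card
        ≤ (Fintype.piFinset (fun _ : Fin (κ+2) × Fin (μ+1) => X)).card :=
          Finset.card_le_card hsub
      _ = X.card ^ ((κ+2)*(μ+1)) := by
          rw [Fintype.card_piFinset, Finset.prod_const, Finset.card_univ,
            Fintype.card_prod, Fintype.card_fin, Fintype.card_fin]
      _ ≤ C := by
          rw [hC, hKM]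
          exact Nat.pow_le_pow_left hXcard _
  -- every image set is counted by fAv
  have himg : (Good.image φv).card ≤ fAv d (κ+2) (μ+2) A v := by
    set P : Finset (Fin d → ℕ) → Prop := fun X =>
      ∃ x : Fin (κ+2) → Fin (μ+2) → (Fin d → ℕ),
        Function.Injective (fun p : Fin (κ+2) × Fin (μ+2) => x p.1 p.2) ∧
        (∀ (ℓ : Fin (κ+2)) (i : Fin (μ+2)), (ℓ : ℕ) = 0 ∧ (i : ℕ) = 0 → x ℓ i = v) ∧
        (∀ (ℓ : Fin (κ+2)) (i : Fin (μ+2)), ¬((ℓ : ℕ) = 0 ∧ (i : ℕ) = 0) →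
          x ℓ i ∈ A ∧ x ℓ i ≠ v) ∧
        (∀ ℓ₁ ℓ₂ : Fin (κ+2), ∑ i, x ℓ₁ i = ∑ i, x ℓ₂ i) ∧
        X = Finset.image (fun p : Fin (κ+2) × Fin (μ+2) => x p.1 p.2)
              (Finset.univ.filter fun p : Fin (κ+2) × Fin (μ+2) =>
                ¬((p.1 : ℕ) = 0 ∧ (p.2 : ℕ) = 0)) with hP
    have hPI : ∀ X ∈ Good.image φv, P X := by
      intro X hX
      obtain ⟨y, hyG, rfl⟩ := Finset.mem_image.mp hX
      have hyT : y ∈ T := (Finset.mem_filter.mp hyG).1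
      have hQy : Q y := (Finset.mem_filter.mp hyG).2
      simp only [hQ] at hQy
      obtain ⟨hQ1, hQ2⟩ := hQy
      refine ⟨fun ℓ i => xfn v y (ℓ, i), ?_, ?_, ?_, ?_, rfl⟩
      · intro p q hpq'
        by_contra hne
        exact hQ2 p q hne hpq'
      · rintro ℓ i ⟨h1, h2⟩
        have hℓ : ℓ = 0 := Fin.ext h1
        have hi : i = 0 := Fin.ext h2
        rw [hℓ, hi]
        exact xfn_zero v y
      · intro ℓ i hni
        have hne : (ℓ, i) ≠ ((0 : Fin (κ+2)), (0 : Fin (μ+2))) := by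
          intro hc
          rw [Prod.ext_iff] at hc
          exact hni ⟨congrArg Fin.val hc.1, congrArg Fin.val hc.2⟩
        refine ⟨hQ1 (ℓ, i) hne, fun hc => hQ2 (ℓ, i) (0, 0) hne ?_⟩
        rw [xfn_zero]
        exact hc
      · intro ℓ₁ ℓ₂
        have hrow : ∀ ℓ : Fin (κ+2), ∑ i : Fin (μ+2), xfn v y (ℓ, i)
            = fun j => v j + S0 y j := by
          intro ℓ
          by_cases hℓ : ℓ = 0
          · rw [hℓ]; exact sum_row0 y
          · exact sum_rowl hb hn3 hv hyT hℓ
        rw [hrow ℓ₁, hrow ℓ₂]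
    have hfin : {X | P X}.Finite := by
      apply Set.Finite.subset (A.powerset.finite_toSet)
      intro X hX
      obtain ⟨x, _, _, hxA, _, hXeq⟩ := hX
      rw [Finset.mem_coe, Finset.mem_powerset]
      intro t ht
      rw [hXeq] at ht
      obtain ⟨p, hp, rfl⟩ := Finset.mem_image.mp ht
      exact (hxA p.1 p.2 (Finset.mem_filter.mp hp).2).1
    calc (Good.image φv).card = (↑(Good.image φv) : Set (Finset (Fin d → ℕ))).ncard :=
          (Set.ncard_coe_finset _).symm
      _ ≤ ({X | P X} : Set (Finset (Fin d → ℕ))).ncard :=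
          Set.ncard_le_ncard (fun X hX => hPI X hX) hfin
      _ = Nat.card {X | P X} := (Nat.card_coe_set_eq _).symm
      _ = fAv d (κ+2) (μ+2) A v := rfl
  -- final numeric chain
  have hnat : n ^ (d * KM) ≤ (6*(μ+2)) ^ (d * KM) * (2*C) * fAv d (κ+2) (μ+2) A v := by
    have h1 : n ^ (d * KM) ≤ ((6*(μ+2))^d * B) ^ KM := by
      rw [pow_mul]
      exact Nat.pow_le_pow_left hnB KM
    have h2 : ((6*(μ+2))^d * B) ^ KM = (6*(μ+2)) ^ (d * KM) * B ^ KM := by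
      rw [mul_pow, ← pow_mul]
    have h3 : B ^ KM ≤ 2 * (C * fAv d (κ+2) (μ+2) A v) := by
      have e1 : B ^ KM = B * R := by
        rw [hB, hpow, ← hB, ← hR]
      calc B ^ KM = B * R := e1
        _ ≤ 2 * Good.card := hGoodhalf
        _ ≤ 2 * (C * (Good.image φv).card) := Nat.mul_le_mul_left _ hfiber
        _ ≤ 2 * (C * fAv d (κ+2) (μ+2) A v) :=
            Nat.mul_le_mul_left _ (Nat.mul_le_mul_left _ himg)
    calc n ^ (d * KM) ≤ (6*(μ+2)) ^ (d * KM) * B ^ KM := by rw [← h2]; exact h1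
      _ ≤ (6*(μ+2)) ^ (d * KM) * (2 * (C * fAv d (κ+2) (μ+2) A v)) :=
          Nat.mul_le_mul_left _ h3
      _ = (6*(μ+2)) ^ (d * KM) * (2*C) * fAv d (κ+2) (μ+2) A v := by ring
  -- conclude over ℝ
  have hexp : d * (κ+2) * ((μ+2) - 1) = d * KM := by
    rw [hKM, show (μ+2) - 1 = μ + 1 from by omega]
    ring
  rw [hexp]
  have hfinR : ((n:ℝ))^(d*KM)
      ≤ (((6*(μ+2)) ^ (d * KM) * (2*C) : ℕ) : ℝ) * (fAv d (κ+2) (μ+2) A v : ℝ) := by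
    exact_mod_cast hnat
  have hXpos : (0:ℝ) < (((6*(μ+2)) ^ (d * KM) * (2*C) : ℕ) : ℝ) := by positivity
  calc (((6*(μ+2)) ^ (d * KM) * (2*C) : ℕ) : ℝ)⁻¹ * (n:ℝ)^(d*KM)
      ≤ (((6*(μ+2)) ^ (d * KM) * (2*C) : ℕ) : ℝ)⁻¹ *
        ((((6*(μ+2)) ^ (d * KM) * (2*C) : ℕ) : ℝ) * (fAv d (κ+2) (μ+2) A v : ℝ)) :=
        mul_le_mul_of_nonneg_left hfinR (by positivity)
    _ = (fAv d (κ+2) (μ+2) A v : ℝ) := by field_simp
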